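/- The language L = (aa)^+ ∪ (bb)^+ over the alphabet {a, b} is not strictly locally testable: for every k ≥ 2, L is not k-slt. -/

import Mathlib

/-- `L` is `k`-strictly locally testable, as defined by the sets `I` (allowed
prefixes of length `k-1`), `T` (allowed suffixes of length `k-1`) and `F`
(allowed factors of length `k`): membership of words of length `< k` is
unconstrained. -/
def IsSLTWith {B : Type} (k : ℕ) (I T F : Set (List B)) (L : Set (List B)) : Prop :=
  (∀ w ∈ I, w.length = k - 1) ∧ (∀ w ∈ T, w.length = k - 1) ∧ (∀ w ∈ F, w.length = k) ∧
  ∀ x : List B, k ≤ x.length →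
    (x ∈ L ↔ x.take (k - 1) ∈ I ∧ x.drop (x.length - (k - 1)) ∈ T ∧
      ∀ y : List B, y.length = k → y <:+: x → y ∈ F)

/-- `L` is `k`-strictly locally testable. -/
def IsSLT {B : Type} (k : ℕ) (L : Set (List B)) : Prop :=
  ∃ I T F, IsSLTWith k I T F L

/-- `L ⊆ A⁺` is `(m,k)`-homomorphic: it is the letterwise homomorphic image of a
`k`-slt language `L' ⊆ B⁺` over an alphabet `B` of cardinality `m`. -/
def IsHomomorphic {A : Type} (m k : ℕ) (L : Set (List A)) : Prop :=
  ∃ (B : Type) (instB : Fintype B) (L' : Set (List B)) (π : B → A),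
    @Fintype.card B instB = m ∧ IsSLT k L' ∧ [] ∉ L' ∧ L = (List.map π) '' L'

/-- The two-letter alphabet `{a, b}`. -/
inductive Letter : Type
  | a : Letter
  | b : Letter
deriving DecidableEq

instance : Fintype Letter :=
  ⟨{Letter.a, Letter.b}, fun x => by cases x <;> simp⟩

/-- The language `L = (aa)⁺ ∪ (bb)⁺`. -/
def Leven : Set (List Letter) :=
  {w | ∃ j : ℕ, 1 ≤ j ∧
    (w = List.replicate (2 * j) Letter.a ∨ w = List.replicate (2 * j) Letter.b)}

lemma infix_replicate {B : Type} {y : List B} {n k : ℕ} {c : B}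
    (hy : y.length = k) (h : y <:+: List.replicate n c) : y = List.replicate k c := by
  rw [List.eq_replicate_iff]
  exact ⟨hy, fun b hb => List.eq_of_mem_replicate (h.subset hb)⟩

/-- The language `L = (aa)⁺ ∪ (bb)⁺` is not strictly locally
testable: for every `k ≥ 2`, `L` is not `k`-slt. -/
theorem Leven_not_slt : ∀ k : ℕ, 2 ≤ k → ¬ IsSLT k Leven := by
  rintro k hk ⟨I, T, F, hI, hT, hF, h⟩
  have hx : List.replicate (2*k) Letter.a ∈ Leven := ⟨k, by omega, Or.inl rfl⟩
  have hlen : k ≤ (List.replicate (2*k) Letter.a).length := by simp; omega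
  obtain ⟨hI', hT', hF'⟩ := (h _ hlen).mp hx
  have hlen' : k ≤ (List.replicate (2*k+1) Letter.a).length := by simp; omega
  have hfacF : List.replicate k Letter.a ∈ F := by
    apply hF' _ (by simp)
    exact ⟨[], List.replicate k Letter.a, by simp [← List.replicate_add, two_mul]⟩
  have hx' : List.replicate (2*k+1) Letter.a ∈ Leven := by
    apply (h _ hlen').mpr
    refine ⟨?_, ?_, ?_⟩
    · have e1 : (List.replicate (2*k+1) Letter.a).take (k-1)
          = (List.replicate (2*k) Letter.a).take (k-1) := by
        simp [List.take_replicate]; omega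
      rw [e1]; exact hI'
    · have e2 : (List.replicate (2*k+1) Letter.a).drop ((2*k+1) - (k-1))
          = (List.replicate (2*k) Letter.a).drop ((2*k) - (k-1)) := by
        simp [List.drop_replicate]; omega
      simpa [e2] using hT'
    · intro y hy hinf
      rw [infix_replicate hy hinf]
      exact hfacF
  obtain ⟨j, hj, heq | heq⟩ := hx'
  · have := congrArg List.length heq
    simp at this; omega
  · have hmem : Letter.a ∈ List.replicate (2*j) Letter.b := by
      rw [← heq]; exact List.mem_replicate.mpr ⟨by omega, rfl⟩
    exact absurd (List.eq_of_mem_replicate hmem) (by simp)
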